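/- Every point of a tile of a tile-substitution has a radix expansion in the iterated digit sets: for every j ≤ m and every a ∈ A_j there exist a sequence of colours i₀ = j, i₁, i₂, … in {1,…,m} and digits d_n ∈ (D^k)_{i_n i_{n−1}} (n ≥ 1) such that the series Σ_{n=1}^∞ Q^{−nk} d_n converges to a. -/

import Mathlib

open Pointwise Set Filter

noncomputable section

/-- Iterated digit sets: `iterD Q D n i j` is `(Dⁿ)_{ij}`. -/
def iterD {E : Type*} [AddCommGroup E] {m : ℕ}
    (Q : E → E) (D : Fin m → Fin m → Set E) : ℕ → Fin m → Fin m → Set E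
  | 0 => fun i j => if i = j then {0} else ∅
  | n + 1 => fun i j => ⋃ l : Fin m, D i l + Q '' iterD Q D n l j

/-- every point of a tile has a radix expansion in the iterated digit
sets: there are colours `i₀ = j, i₁, i₂, …` and digits `d_n ∈ (D^k)_{i_n i_{n-1}}`
with `a = Σ_{n≥1} Q^{-nk} d_n`. -/
theorem stmt_2 (d m k : ℕ) (hd : 1 ≤ d) (hm : 1 ≤ m) (hk : 1 ≤ k)
    (Q : EuclideanSpace ℝ (Fin d) ≃L[ℝ] EuclideanSpace ℝ (Fin d))
    (hQk : ‖(Q.symm : EuclideanSpace ℝ (Fin d) →L[ℝ] EuclideanSpace ℝ (Fin d)) ^ k‖ < 1)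
    (D : Fin m → Fin m → Set (EuclideanSpace ℝ (Fin d)))
    (hDfin : ∀ i j, (D i j).Finite)
    (A : Fin m → Set (EuclideanSpace ℝ (Fin d)))
    (hAne : ∀ i, (A i).Nonempty) (hAcp : ∀ i, IsCompact (A i))
    (htile : ∀ j, ⇑Q '' A j = ⋃ i, D i j + A i) :
    ∀ j : Fin m, ∀ a ∈ A j,
      ∃ c : ℕ → Fin m, c 0 = j ∧
        ∃ dg : ℕ → EuclideanSpace ℝ (Fin d),
          (∀ n : ℕ, dg (n + 1) ∈ iterD (⇑Q) D k (c (n + 1)) (c n)) ∧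
          Tendsto (fun N : ℕ => ∑ n ∈ Finset.range N,
              ((Q.symm : EuclideanSpace ℝ (Fin d) →L[ℝ] EuclideanSpace ℝ (Fin d)) ^ ((n + 1) * k))
                (dg (n + 1)))
            atTop (nhds a) := by
  haveI : Nonempty (Fin d) := Fin.pos_iff_nonempty.mp hd
  haveI : Nontrivial (EuclideanSpace ℝ (Fin d)) := by
    obtain ⟨i⟩ := (inferInstance : Nonempty (Fin d))
    exact ⟨0, EuclideanSpace.single i 1, by
      intro h
      have := congrArg (fun f : EuclideanSpace ℝ (Fin d) => f i) h
      simp [EuclideanSpace.single] at this⟩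
  set Qs : EuclideanSpace ℝ (Fin d) →L[ℝ] EuclideanSpace ℝ (Fin d) := (Q.symm : EuclideanSpace ℝ (Fin d) →L[ℝ] EuclideanSpace ℝ (Fin d)) with hQs
  -- one-step decomposition
  have step1 : ∀ j : Fin m, ∀ a ∈ A j, ∃ i, ∃ e ∈ D i j, ∃ a' ∈ A i, Q a = e + a' := by
    intro j a ha
    have h : Q a ∈ ⋃ i, D i j + A i := (htile j) ▸ Set.mem_image_of_mem ⇑Q ha
    rw [Set.mem_iUnion] at h
    obtain ⟨i, hi⟩ := h
    obtain ⟨e, he, a', ha', hsum⟩ := Set.mem_add.1 hi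
    exact ⟨i, e, he, a', ha', hsum.symm⟩
  -- iterated decomposition
  have stepk : ∀ (K : ℕ) (j : Fin m), ∀ a ∈ A j,
      ∃ i, ∃ e ∈ iterD (⇑Q) D K i j, ∃ a' ∈ A i, (⇑Q)^[K] a = e + a' := by
    intro K
    induction K with
    | zero =>
      intro j a ha
      refine ⟨j, 0, by simp [iterD], a, ha, by simp⟩
    | succ K ih =>
      intro j a ha
      obtain ⟨l, e, he, a', ha', hsum⟩ := ih j a ha
      obtain ⟨i, f, hf, a'', ha'', hsum'⟩ := step1 l a' ha'
      refine ⟨i, f + Q e, ?_, a'', ha'', ?_⟩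
      · rw [show iterD (⇑Q) D (K + 1) i j = ⋃ l, D i l + ⇑Q '' iterD (⇑Q) D K l j from rfl]
        exact Set.mem_iUnion.2 ⟨l, Set.add_mem_add hf (Set.mem_image_of_mem _ he)⟩
      · rw [Function.iterate_succ_apply', hsum, map_add, hsum']
        abel
  -- choice of next state
  have hF : ∀ p : Σ' (i : Fin m), {x : EuclideanSpace ℝ (Fin d) // x ∈ A i},
      ∃ q : Σ' (i : Fin m), {x : EuclideanSpace ℝ (Fin d) // x ∈ A i}, ∃ e ∈ iterD (⇑Q) D k q.1 p.1,
        (p.2 : EuclideanSpace ℝ (Fin d)) = (Qs ^ k) e + (Qs ^ k) (q.2 : EuclideanSpace ℝ (Fin d)) := by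
    intro p
    obtain ⟨i, e, he, a', ha', hsum⟩ := stepk k p.1 p.2 p.2.2
    refine ⟨⟨i, a', ha'⟩, e, he, ?_⟩
    have hinv : (⇑Q.symm)^[k] ((⇑Q)^[k] (p.2 : EuclideanSpace ℝ (Fin d))) = (p.2 : EuclideanSpace ℝ (Fin d)) :=
      (Function.LeftInverse.iterate Q.symm_apply_apply k) _
    have hpow : ∀ x : EuclideanSpace ℝ (Fin d), (Qs ^ k) x = (⇑Q.symm)^[k] x := by
      intro x
      rw [ContinuousLinearMap.coe_pow']
      rfl
    rw [← map_add, ← hsum, hpow]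
    exact hinv.symm
  choose F eF heF hrel using hF
  intro j a ha
  set p0 : Σ' (i : Fin m), {x : EuclideanSpace ℝ (Fin d) // x ∈ A i} := ⟨j, a, ha⟩ with hp0
  set seq : ℕ → Σ' (i : Fin m), {x : EuclideanSpace ℝ (Fin d) // x ∈ A i} := fun n => F^[n] p0 with hseq
  have hseqsucc : ∀ n, seq (n + 1) = F (seq n) := fun n => Function.iterate_succ_apply' F n p0
  refine ⟨fun n => (seq n).1, rfl, fun n => if n = 0 then 0 else eF (seq (n - 1)), ?_, ?_⟩
  · intro n
    simpa [hseqsucc n] using heF (seq n)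
  · -- telescoping identity
    have key : ∀ N : ℕ,
        (∑ n ∈ Finset.range N, (Qs ^ ((n + 1) * k))
          ((fun n => if n = 0 then 0 else eF (seq (n - 1))) (n + 1)))
        = a - (Qs ^ (N * k)) ((seq N).2 : EuclideanSpace ℝ (Fin d)) := by
      intro N
      induction N with
      | zero =>
        have h0 : seq 0 = p0 := rfl
        rw [Finset.sum_range_zero, h0, hp0]
        simp
      | succ N ih =>
        rw [Finset.sum_range_succ, ih]
        have h1 : ((seq N).2 : EuclideanSpace ℝ (Fin d)) = (Qs ^ k) (eF (seq N)) + (Qs ^ k) ((seq (N + 1)).2 : EuclideanSpace ℝ (Fin d)) := by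
          rw [hseqsucc N]; exact hrel (seq N)
        have h2 : (Qs ^ (N * k)) ((seq N).2 : EuclideanSpace ℝ (Fin d))
            = (Qs ^ ((N + 1) * k)) (eF (seq N)) + (Qs ^ ((N + 1) * k)) ((seq (N + 1)).2 : EuclideanSpace ℝ (Fin d)) := by
          have h3 : Qs ^ ((N + 1) * k) = Qs ^ (N * k) * Qs ^ k := by
            rw [← pow_add]; ring_nf
          rw [h1, map_add, h3, ContinuousLinearMap.mul_apply, ContinuousLinearMap.mul_apply]
        rw [h2]
        simp
        abel
    -- uniform bound on A
    have hbd : ∀ i : Fin m, ∃ C : ℝ, ∀ x ∈ A i, ‖x‖ ≤ C := fun i =>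
      (hAcp i).isBounded.exists_norm_le
    choose C hC using hbd
    obtain ⟨C0, hC0⟩ := Finite.exists_le C
    have htail : Tendsto (fun N : ℕ => (Qs ^ (N * k)) ((seq N).2 : EuclideanSpace ℝ (Fin d))) atTop (nhds 0) := by
      rw [tendsto_zero_iff_norm_tendsto_zero]
      have hb : ∀ N : ℕ, ‖(Qs ^ (N * k)) ((seq N).2 : EuclideanSpace ℝ (Fin d))‖ ≤ ‖Qs ^ k‖ ^ N * max C0 0 := by
        intro N
        calc ‖(Qs ^ (N * k)) ((seq N).2 : EuclideanSpace ℝ (Fin d))‖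
            ≤ ‖Qs ^ (N * k)‖ * ‖((seq N).2 : EuclideanSpace ℝ (Fin d))‖ := (Qs ^ (N * k)).le_opNorm _
          _ ≤ ‖Qs ^ k‖ ^ N * max C0 0 := by
              apply mul_le_mul
              · rw [mul_comm, pow_mul]; exact norm_pow_le _ _
              · exact le_max_of_le_left (le_trans (hC _ _ (seq N).2.2) (hC0 _))
              · exact norm_nonneg _
              · positivity
        done
      refine squeeze_zero (fun N => norm_nonneg _) hb ?_
      have h4 : Tendsto (fun N : ℕ => ‖Qs ^ k‖ ^ N) atTop (nhds 0) :=
        tendsto_pow_atTop_nhds_zero_of_lt_one (norm_nonneg (Qs ^ k)) hQk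
      have h5 := h4.mul_const (max C0 0)
      rw [zero_mul] at h5
      exact h5
    have := htail.const_sub a
    rw [sub_zero] at this
    exact this.congr fun N => (key N).symm
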